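/- Suppose y : [t₀,T] → ℝ≥0 is absolutely continuous, D : [t₀,T] → ℝ≥0 integrable, and y'(t) + D(t) ≤ C₁ y(t)² · D̃(t) + h(t) where D̃(t) ≤ D(t) and ∫ h ≤ K. If additionally y(t₀) = 0 and the a priori bound sup y(t) ≤ 4CK holds with 4CK ≤ 1 and appropriate smallness of K, then in fact sup_{[t₀,T]} y(t) + ∫_{t₀}^{T} D(t) dt ≤ 2CK (continuity/bootstrap improvement). -/

import Mathlib

open MeasureTheory Set intervalIntegral

/-- Abstract bootstrap (continuation) argument: if `y(t₀) = 0`,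
`y' + D ≤ C₁ y² D̃ + h` with `D̃ ≤ D`, `∫ h ≤ K`, the a priori bound
`sup y ≤ 4CK ≤ 1` holds, `1 ≤ C`, and `K` is appropriately small
(`C₁(4CK)² ≤ 1/2`), then in fact `sup y + ∫ D ≤ 2CK`. -/
theorem stmt13 (t₀ T C C₁ K : ℝ) (ht : t₀ ≤ T) (hC : 1 ≤ C) (hC₁ : 0 ≤ C₁)
    (hK : 0 ≤ K)
    (y y' D Dt h : ℝ → ℝ)
    (hy : ∀ t ∈ Icc t₀ T, HasDerivAt y (y' t) t)
    (hypos : ∀ t ∈ Icc t₀ T, 0 ≤ y t)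
    (hDpos : ∀ t ∈ Icc t₀ T, 0 ≤ D t) (hDtpos : ∀ t ∈ Icc t₀ T, 0 ≤ Dt t)
    (hhpos : ∀ t ∈ Icc t₀ T, 0 ≤ h t)
    (hDint : IntervalIntegrable D volume t₀ T)
    (hDtint : IntervalIntegrable Dt volume t₀ T)
    (hhint : IntervalIntegrable h volume t₀ T)
    (hDtD : ∀ t ∈ Icc t₀ T, Dt t ≤ D t)
    (hdiff : ∀ t ∈ Icc t₀ T, y' t + D t ≤ C₁ * (y t) ^ 2 * Dt t + h t)
    (hhK : ∫ t in t₀..T, h t ≤ K)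
    (hy0 : y t₀ = 0)
    (hapriori : ∀ t ∈ Icc t₀ T, y t ≤ 4 * C * K)
    (hsmall₁ : 4 * C * K ≤ 1)
    (hsmall₂ : C₁ * (4 * C * K) ^ 2 ≤ 1/2) :
    ∀ t ∈ Icc t₀ T, y t + ∫ s in t₀..t, D s ≤ 2 * C * K := by
  intro t htmem
  obtain ⟨ht₀, htT⟩ := htmem
  have hsub : Icc t₀ t ⊆ Icc t₀ T := Icc_subset_Icc le_rfl htT
  have huIcc : uIcc t₀ t ⊆ uIcc t₀ T := by
    rw [uIcc_of_le ht₀, uIcc_of_le ht]; exact hsub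
  have hDint' : IntervalIntegrable D volume t₀ t := hDint.mono_set huIcc
  have hDtint' : IntervalIntegrable Dt volume t₀ t := hDtint.mono_set huIcc
  have hhint' : IntervalIntegrable h volume t₀ t := hhint.mono_set huIcc
  have hhint'' : IntervalIntegrable h volume t T :=
    hhint.mono_set (by rw [uIcc_of_le htT, uIcc_of_le ht]
                       exact Icc_subset_Icc ht₀ le_rfl)
  -- continuity of y on Icc t₀ t
  have hycont : ContinuousOn y (Icc t₀ t) := fun s hs =>
    ((hy s (hsub hs)).continuousAt).continuousWithinAt
  -- integrability of the bound φ
  have hmul : IntervalIntegrable (fun s => C₁ * y s ^ 2 * Dt s) volume t₀ t := by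
    apply hDtint'.continuousOn_mul
    rw [uIcc_of_le ht₀]
    exact continuousOn_const.mul (hycont.pow 2)
  have hφint : IntervalIntegrable (fun s => C₁ * y s ^ 2 * Dt s + h s - D s) volume t₀ t :=
    (hmul.add hhint').sub hDint'
  have hφIcc : IntegrableOn (fun s => C₁ * y s ^ 2 * Dt s + h s - D s) (Icc t₀ t) volume := by
    rwa [intervalIntegrable_iff_integrableOn_Icc_of_le ht₀] at hφint
  -- FTC-type inequality
  have key : y t - y t₀ ≤ ∫ s in t₀..t, (C₁ * y s ^ 2 * Dt s + h s - D s) := by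
    apply sub_le_integral_of_hasDeriv_right_of_le ht₀ hycont
      (fun x hx => (hy x (hsub (Ioo_subset_Icc_self hx))).hasDerivWithinAt) hφIcc
    intro x hx
    have := hdiff x (hsub (Ioo_subset_Icc_self hx))
    linarith
  rw [hy0, sub_zero] at key
  rw [integral_sub (hmul.add hhint') hDint', integral_add hmul hhint'] at key
  -- bound ∫ C₁ y² Dt ≤ (1/2) ∫ D
  have hb1 : ∫ s in t₀..t, C₁ * y s ^ 2 * Dt s ≤ ∫ s in t₀..t, (1/2 : ℝ) * D s := by
    apply integral_mono_on ht₀ hmul (hDint'.const_mul _)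
    intro s hs
    have hs' := hsub hs
    have h1 : y s ≤ 4 * C * K := hapriori s hs'
    have h2 : 0 ≤ y s := hypos s hs'
    have h3 : 0 ≤ Dt s := hDtpos s hs'
    have h4 : Dt s ≤ D s := hDtD s hs'
    have h5 : C₁ * y s ^ 2 ≤ C₁ * (4 * C * K) ^ 2 := by
      apply mul_le_mul_of_nonneg_left _ hC₁
      exact pow_le_pow_left₀ h2 h1 2
    have h6 : C₁ * y s ^ 2 * Dt s ≤ (1/2 : ℝ) * Dt s :=
      mul_le_mul (h5.trans hsmall₂) le_rfl h3 (by norm_num)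
    have h7 : (1/2 : ℝ) * Dt s ≤ (1/2 : ℝ) * D s := by linarith
    linarith
  rw [intervalIntegral.integral_const_mul] at hb1
  -- bound ∫ h on [t₀,t] by K
  have hb2 : ∫ s in t₀..t, h s ≤ K := by
    have hsplit : (∫ s in t₀..t, h s) + ∫ s in t..T, h s = ∫ s in t₀..T, h s :=
      integral_add_adjacent_intervals hhint' hhint''
    have hpos : 0 ≤ ∫ s in t..T, h s := by
      apply integral_nonneg htT
      intro s hs
      exact hhpos s ⟨ht₀.trans hs.1, hs.2⟩
    linarith
  have hDnn : 0 ≤ ∫ s in t₀..t, D s := by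
    apply integral_nonneg ht₀
    intro s hs; exact hDpos s (hsub hs)
  have hynn : 0 ≤ y t := hypos t ⟨ht₀, htT⟩
  have hKCK : K ≤ C * K := le_mul_of_one_le_left hK hC
  -- combine: y t + ∫ D ≤ (1/2) ∫ D + K hence y t + ∫ D ≤ 2K ≤ 2CK
  nlinarith [key, hb1, hb2, hDnn, hynn, hKCK]
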